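/- Let α ∈ (0, 2π/3] and let p₁, p₂, p₃ ∈ ℝ² be affinely independent points. Then there do not exist points b₁, b₂, b₃ in the interior of the triangle conv{p₁,p₂,p₃} with ∠(p₂,b₁,p₃) = α, ∠(p₁,b₂,p₃) = α and ∠(p₁,b₃,p₂) = α such that the images of the three α-bend edges e₁ = (p₂,b₁,p₃), e₂ = (p₁,b₂,p₃), e₃ = (p₁,b₃,p₂) pairwise intersect only in their common endpoints, i.e., image(e₁) ∩ image(e₂) ⊆ {p₃}, image(e₁) ∩ image(e₃) ⊆ {p₂}, and image(e₂) ∩ image(e₃) ⊆ {p₁}. (A triangle cannot contain three pairwise noncrossing α-bend edges between its three vertices when α ≤ 2π/3.) -/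

import Mathlib

open EuclideanGeometry Real Set

noncomputable section

/-- The Euclidean plane. -/
abbrev Pt : Type := EuclideanSpace ℝ (Fin 2)

/-- The image of a one-bend edge `(a,b,c)`: the union of segments `[a,b]` and `[b,c]`. -/
def bendImage (e : Pt × Pt × Pt) : Set Pt :=
  segment ℝ e.1 e.2.1 ∪ segment ℝ e.2.1 e.2.2

/-- The endpoints of a (bend or arc) edge `(a,b,c)` are `a` and `c`. -/
def edgeEndpoints (e : Pt × Pt × Pt) : Set Pt := {e.1, e.2.2}

/-- An `α`-bend edge: a triple `(a,b,c)` with `a ≠ c` and angle `α` at `b`. -/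
def IsBendEdge (α : ℝ) (e : Pt × Pt × Pt) : Prop :=
  e.1 ≠ e.2.2 ∧ ∠ e.1 e.2.1 e.2.2 = α

/-- A plane `α`-bend multigraph on a finite vertex set `V`. -/
def IsPlaneBendMultigraph (α : ℝ) (V : Finset Pt) (E : Finset (Pt × Pt × Pt)) : Prop :=
  (∀ e ∈ E, IsBendEdge α e ∧ e.1 ∈ V ∧ e.2.2 ∈ V) ∧
  (∀ e ∈ E, ∀ f ∈ E, e ≠ f → bendImage e ≠ bendImage f) ∧
  (∀ e ∈ E, ∀ v ∈ V, (v : Pt) ∈ bendImage e → (v : Pt) ∈ edgeEndpoints e) ∧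
  (∀ e ∈ E, ∀ f ∈ E, e ≠ f →
    bendImage e ∩ bendImage f ⊆ edgeEndpoints e ∩ edgeEndpoints f)

/-- A plane `α`-bend graph: a plane `α`-bend multigraph in which distinct edges
have distinct endpoint pairs. -/
def IsPlaneBendGraph (α : ℝ) (V : Finset Pt) (E : Finset (Pt × Pt × Pt)) : Prop :=
  IsPlaneBendMultigraph α V E ∧
  ∀ e ∈ E, ∀ f ∈ E, e ≠ f → edgeEndpoints e ≠ edgeEndpoints f

/-- An `α`-arc edge: a triple `(a,b,c)` with `a ≠ c`, `b` off of the line `ac`,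
and angle `α` at `b`. -/
def IsArcEdge (α : ℝ) (e : Pt × Pt × Pt) : Prop :=
  e.1 ≠ e.2.2 ∧ e.2.1 ∉ affineSpan ℝ ({e.1, e.2.2} : Set Pt) ∧ ∠ e.1 e.2.1 e.2.2 = α

/-- The image of an arc edge `(a,b,c)`: `{a,c}` together with the points strictly on the
same side of line `ac` as `b` from which the segment `ac` subtends the same angle as at `b`. -/
def arcImage (e : Pt × Pt × Pt) : Set Pt :=
  ({e.1, e.2.2} : Set Pt) ∪
    {x : Pt | (affineSpan ℝ ({e.1, e.2.2} : Set Pt)).SSameSide x e.2.1 ∧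
      ∠ e.1 x e.2.2 = ∠ e.1 e.2.1 e.2.2}

/-- A plane `α`-arc multigraph on a finite vertex set `V`. -/
def IsPlaneArcMultigraph (α : ℝ) (V : Finset Pt) (E : Finset (Pt × Pt × Pt)) : Prop :=
  (∀ e ∈ E, IsArcEdge α e ∧ e.1 ∈ V ∧ e.2.2 ∈ V) ∧
  (∀ e ∈ E, ∀ f ∈ E, e ≠ f → arcImage e ≠ arcImage f) ∧
  (∀ e ∈ E, ∀ v ∈ V, (v : Pt) ∈ arcImage e → (v : Pt) ∈ edgeEndpoints e) ∧
  (∀ e ∈ E, ∀ f ∈ E, e ≠ f →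
    arcImage e ∩ arcImage f ⊆ edgeEndpoints e ∩ edgeEndpoints f)

/-- A plane `α`-arc graph: a plane `α`-arc multigraph in which distinct edges
have distinct endpoint pairs. -/
def IsPlaneArcGraph (α : ℝ) (V : Finset Pt) (E : Finset (Pt × Pt × Pt)) : Prop :=
  IsPlaneArcMultigraph α V E ∧
  ∀ e ∈ E, ∀ f ∈ E, e ≠ f → edgeEndpoints e ≠ edgeEndpoints f

/-- A finite point set is in general position if no three of its points are collinear. -/
def GenPos (P : Finset Pt) : Prop :=
  ∀ p ∈ P, ∀ q ∈ P, ∀ r ∈ P, p ≠ q → p ≠ r → q ≠ r →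
    ¬ Collinear ℝ ({p, q, r} : Set Pt)

/-- A planar straight-line graph on `P`: edges are (ordered representatives of unordered)
pairs of distinct points of `P` whose closed segments pairwise intersect only in shared
endpoints, and no segment contains a point of `P` other than its endpoints. -/
def IsPSLG (P : Finset Pt) (E : Finset (Pt × Pt)) : Prop :=
  (∀ e ∈ E, e.1 ∈ P ∧ e.2 ∈ P ∧ e.1 ≠ e.2) ∧
  (∀ e ∈ E, ∀ f ∈ E, e ≠ f → segment ℝ e.1 e.2 ≠ segment ℝ f.1 f.2) ∧
  (∀ e ∈ E, ∀ p ∈ P, (p : Pt) ∈ segment ℝ e.1 e.2 → p = e.1 ∨ p = e.2) ∧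
  (∀ e ∈ E, ∀ f ∈ E, e ≠ f →
    segment ℝ e.1 e.2 ∩ segment ℝ f.1 f.2 ⊆ ({e.1, e.2} : Set Pt) ∩ ({f.1, f.2} : Set Pt))

/-- `M P`: the maximum number of edges of a planar straight-line graph on `P`. -/
def M (P : Finset Pt) : ℕ :=
  sSup {m : ℕ | ∃ E : Finset (Pt × Pt), IsPSLG P E ∧ E.card = m}

/-- Two segments (given by their endpoint pairs) cross: they meet in exactly one point,
which lies in the relative interior (open segment) of both. -/
def SegCross (s t : Pt × Pt) : Prop :=
  ∃ x : Pt, segment ℝ s.1 s.2 ∩ segment ℝ t.1 t.2 = {x} ∧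
    x ∈ openSegment ℝ s.1 s.2 ∧ x ∈ openSegment ℝ t.1 t.2

section AuxBend

set_option maxHeartbeats 1600000

lemma weights_eq (B : AffineBasis (Fin 3) ℝ Pt) (w : Fin 3 → ℝ) (hw : w 0 + w 1 + w 2 = 1)
    (x : Pt) (hx : x = w 0 • B 0 + w 1 • B 1 + w 2 • B 2) : ∀ i, B.coord i x = w i := by
  intro i
  have hsum : ∑ j, w j = 1 := by rw [Fin.sum_univ_three]; exact hw
  have hc : x = Finset.univ.affineCombination ℝ B w := by
    rw [Finset.univ.affineCombination_eq_linear_combination _ _ hsum, Fin.sum_univ_three]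
    exact hx
  rw [hc, B.coord_apply_combination_of_mem (Finset.mem_univ i) hsum]

lemma helperA {q r s u y : Pt} {u₁ u₂ u₃ y₁ y₂ y₃ : ℝ}
    (hu : u = u₁ • s + u₂ • q + u₃ • r) (hus : u₁ + u₂ + u₃ = 1)
    (hy : y = y₁ • s + y₂ • q + y₃ • r) (hys : y₁ + y₂ + y₃ = 1)
    (h1 : 0 ≤ y₁) (hu₁ : 0 < u₁)
    (hF : u₁ * y₃ = u₃ * y₁) (hG : u₂ * y₁ ≤ u₁ * y₂) :
    y ∈ segment ℝ q u := by
  have e1 : y₁ = u₁*y₁+u₂*y₁+u₃*y₁ := by linear_combination (-y₁) * hus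
  have e2 : u₁ = u₁*y₁+u₁*y₂+u₁*y₃ := by linear_combination (-u₁) * hys
  have hle : y₁ ≤ u₁ := by linarith
  refine ⟨1 - y₁ / u₁, y₁ / u₁, by
      rw [sub_nonneg]; exact div_le_one_of_le₀ hle hu₁.le,
    div_nonneg h1 hu₁.le, by ring, ?_⟩
  rw [hu, hy]
  match_scalars
  all_goals first
    | (field_simp; done)
    | (field_simp; linear_combination e2 - e1 + hF)
    | (field_simp; linear_combination hF)
    | (field_simp; linarith)

lemma helperB {q r s u y : Pt} {u₁ u₂ u₃ y₁ y₂ y₃ : ℝ}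
    (hu : u = u₁ • s + u₂ • q + u₃ • r) (hus : u₁ + u₂ + u₃ = 1)
    (hy : y = y₁ • s + y₂ • q + y₃ • r) (hys : y₁ + y₂ + y₃ = 1)
    (h1 : 0 ≤ y₁) (hu₁ : 0 < u₁)
    (hF : u₃ * y₁ ≤ u₁ * y₃) (hG : u₁ * y₂ = u₂ * y₁) :
    y ∈ segment ℝ u r := by
  have e1 : y₁ = u₁*y₁+u₂*y₁+u₃*y₁ := by linear_combination (-y₁) * hus
  have e2 : u₁ = u₁*y₁+u₁*y₂+u₁*y₃ := by linear_combination (-u₁) * hys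
  have hle : y₁ ≤ u₁ := by linarith
  refine ⟨y₁ / u₁, 1 - y₁ / u₁, div_nonneg h1 hu₁.le, by
      rw [sub_nonneg]; exact div_le_one_of_le₀ hle hu₁.le, by ring, ?_⟩
  rw [hu, hy]
  match_scalars
  all_goals first
    | (field_simp; done)
    | (field_simp; linear_combination e2 - e1 + hG)
    | (field_simp; linear_combination hG)
    | (field_simp; linarith)

lemma core {q r s u v : Pt} {u₁ u₂ u₃ v₁ v₂ v₃ : ℝ}
    (hnq : ∀ z₁ z₂ z₃ : ℝ, z₁ + z₂ + z₃ = 1 → z₁ • s + z₂ • q + z₃ • r = q → z₁ = 0)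
    (hu : u = u₁ • s + u₂ • q + u₃ • r) (hus : u₁ + u₂ + u₃ = 1)
    (hu₁ : 0 < u₁) (hu₂ : 0 < u₂) (hu₃ : 0 < u₃)
    (hv : v = v₁ • s + v₂ • q + v₃ • r) (hvs : v₁ + v₂ + v₃ = 1)
    (hv₁ : 0 < v₁) (hv₂ : 0 < v₂) (hv₃ : 0 < v₃)
    (hint : (segment ℝ q u ∪ segment ℝ u r) ∩ (segment ℝ s v ∪ segment ℝ v q) ⊆ {q}) :
    u₁ * v₃ < u₃ * v₁ := by
  by_contra hcon
  push_neg at hcon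
  rcases lt_or_ge (u₁ * v₂) (u₂ * v₁) with hG | hG
  · have hv₂1 : v₂ < 1 := by linarith
    have hEpos : 0 < u₁*(1 - v₂) + u₂*v₁ := by nlinarith
    set t : ℝ := u₁ / (u₁*(1 - v₂) + u₂*v₁) with ht
    have ht0 : 0 < t := div_pos hu₁ hEpos
    have ht1 : t < 1 := by rw [ht, div_lt_one hEpos]; nlinarith
    set y : Pt := (1 - t) • q + t • v with hydef
    have hy : y = (t*v₁) • s + (1 - t + t*v₂) • q + (t*v₃) • r := by
      rw [hydef, hv]; module
    have hys : t*v₁ + (1 - t + t*v₂) + t*v₃ = 1 := by linear_combination t * hvs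
    have hyur : y ∈ segment ℝ u r := by
      refine helperB hu hus hy hys (by positivity) hu₁ ?_ ?_
      · nlinarith [mul_le_mul_of_nonneg_left hcon ht0.le]
      · rw [ht]; field_simp; ring
    have hyqv : y ∈ segment ℝ v q := by
      rw [segment_symm]; exact ⟨1 - t, t, by linarith, ht0.le, by ring, rfl⟩
    have hyq : y = q := hint ⟨Or.inr hyur, Or.inr hyqv⟩
    have hz := hnq _ _ _ hys (by rw [← hy, hyq])
    nlinarith [mul_pos ht0 hv₁]
  · have hFv : 0 ≤ u₁*v₃ - u₃*v₁ := by linarith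
    have hGv : 0 ≤ u₁*v₂ - u₂*v₁ := by linarith
    rcases le_or_gt ((u₁*v₃ - u₃*v₁)*u₂) ((u₁*v₂ - u₂*v₁)*u₃) with hsub | hsub
    · have hden : 0 < (u₁*v₃ - u₃*v₁) + u₃ := by linarith
      set t : ℝ := (u₁*v₃ - u₃*v₁) / ((u₁*v₃ - u₃*v₁) + u₃) with ht
      have ht0 : 0 ≤ t := div_nonneg hFv hden.le
      have ht1 : t < 1 := by rw [ht, div_lt_one hden]; linarith
      set y : Pt := (1 - t) • v + t • s with hydef
      have hy : y = ((1-t)*v₁ + t) • s + ((1-t)*v₂) • q + ((1-t)*v₃) • r := by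
        rw [hydef, hv]; module
      have hys : ((1-t)*v₁ + t) + ((1-t)*v₂) + ((1-t)*v₃) = 1 := by
        linear_combination (1-t) * hvs
      have hy1 : 0 < (1-t)*v₁ + t := by nlinarith
      have hkey : t * ((u₁*v₂ - u₂*v₁) + u₂) ≤ (u₁*v₂ - u₂*v₁) := by
        rw [ht, div_mul_eq_mul_div, div_le_iff₀ hden]; nlinarith
      have hyA : y ∈ segment ℝ q u := by
        refine helperA hu hus hy hys hy1.le hu₁ ?_ ?_
        · rw [ht]; field_simp; ring
        · nlinarith [hkey]
      have hyY : y ∈ segment ℝ s v := ⟨t, 1 - t, ht0, by linarith, by ring, by rw [hydef]; module⟩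
      have hyq : y = q := hint ⟨Or.inl hyA, Or.inl hyY⟩
      have hz := hnq _ _ _ hys (by rw [← hy, hyq])
      nlinarith
    · have hden : 0 < (u₁*v₂ - u₂*v₁) + u₂ := by linarith
      set t : ℝ := (u₁*v₂ - u₂*v₁) / ((u₁*v₂ - u₂*v₁) + u₂) with ht
      have ht0 : 0 ≤ t := div_nonneg hGv hden.le
      have ht1 : t < 1 := by rw [ht, div_lt_one hden]; linarith
      set y : Pt := (1 - t) • v + t • s with hydef
      have hy : y = ((1-t)*v₁ + t) • s + ((1-t)*v₂) • q + ((1-t)*v₃) • r := by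
        rw [hydef, hv]; module
      have hys : ((1-t)*v₁ + t) + ((1-t)*v₂) + ((1-t)*v₃) = 1 := by
        linear_combination (1-t) * hvs
      have hy1 : 0 < (1-t)*v₁ + t := by nlinarith
      have hkey : t * ((u₁*v₃ - u₃*v₁) + u₃) ≤ (u₁*v₃ - u₃*v₁) := by
        rw [ht, div_mul_eq_mul_div, div_le_iff₀ hden]; nlinarith
      have hyB : y ∈ segment ℝ u r := by
        refine helperB hu hus hy hys hy1.le hu₁ ?_ ?_
        · nlinarith [hkey]
        · rw [ht]; field_simp; ring
      have hyY : y ∈ segment ℝ s v := ⟨t, 1 - t, ht0, by linarith, by ring, by rw [hydef]; module⟩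
      have hyq : y = q := hint ⟨Or.inr hyB, Or.inl hyY⟩
      have hz := hnq _ _ _ hys (by rw [← hy, hyq])
      nlinarith

lemma angle_split {p q r x : Pt}
    (hind : ∀ c d : ℝ, c • (q - p) + d • (r - p) = 0 → c = 0 ∧ d = 0)
    {s t : ℝ} (hs : 0 < s) (ht : 0 < t)
    (hx : x - p = s • (q - p) + t • (r - p)) :
    ∠ q p x + ∠ x p r = ∠ q p r := by
  have hw : 0 < s + t := by linarith
  have hqr : q ≠ r := by
    intro h; subst h
    have := (hind 1 (-1) (by module)).1
    norm_num at this
  have hqp : q ≠ p := by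
    intro h
    have := (hind 1 0 (by rw [h]; module)).1
    norm_num at this
  have hrp : r ≠ p := by
    intro h
    have := (hind 0 1 (by rw [h]; module)).2
    norm_num at this
  set a : ℝ := s / (s + t) with ha
  set b : ℝ := t / (s + t) with hb
  have ha0 : 0 < a := div_pos hs hw
  have hb0 : 0 < b := div_pos ht hw
  set m : Pt := a • q + b • r with hm
  have hmp : m - p = a • (q - p) + b • (r - p) := by
    rw [hm, ha, hb]; match_scalars <;> field_simp <;> ring
  have hxm : x - p = (s + t) • (m - p) := by
    rw [hmp, hx, ha, hb]; match_scalars <;> field_simp <;> ring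
  have hqm : q - m = b • (q - r) := by
    rw [hm, ha, hb]; match_scalars <;> field_simp <;> ring
  have hrm : r - m = a • (r - q) := by
    rw [hm, ha, hb]; match_scalars <;> field_simp <;> ring
  have hmq : m ≠ q := by
    intro h
    have h0 : q - m = 0 := by rw [h]; simp
    rw [hqm, smul_eq_zero] at h0
    rcases h0 with h0 | h0
    · exact hb0.ne' h0
    · exact hqr (sub_eq_zero.1 h0)
  have hmr : m ≠ r := by
    intro h
    have h0 : r - m = 0 := by rw [h]; simp
    rw [hrm, smul_eq_zero] at h0
    rcases h0 with h0 | h0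
    · exact ha0.ne' h0
    · exact hqr (sub_eq_zero.1 h0).symm
  have hmp' : m ≠ p := by
    intro h
    have h0 : a • (q - p) + b • (r - p) = 0 := by rw [← hmp, h]; simp
    exact ha0.ne' (hind _ _ h0).1
  have h1 : ∠ q p x = ∠ q p m := by
    unfold EuclideanGeometry.angle
    simp only [vsub_eq_sub]
    rw [hxm]
    exact InnerProductGeometry.angle_smul_right_of_pos _ _ hw
  have h2 : ∠ x p r = ∠ m p r := by
    unfold EuclideanGeometry.angle
    simp only [vsub_eq_sub]
    rw [hxm]
    exact InnerProductGeometry.angle_smul_left_of_pos _ _ hw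
  have hpi : ∠ q m r = π := by
    unfold EuclideanGeometry.angle
    simp only [vsub_eq_sub]
    rw [InnerProductGeometry.angle_eq_pi_iff]
    refine ⟨by rw [hqm]; exact smul_ne_zero hb0.ne' (sub_ne_zero.2 hqr), -(a/b), by
        rw [neg_lt, neg_zero]; positivity, ?_⟩
    rw [hqm, hrm, smul_smul]
    have hc : -(a/b) * b = -a := by field_simp
    rw [hc]; module
  have hsupp : ∠ p m q + ∠ p m r = π := angle_add_angle_eq_pi_of_angle_eq_pi p hpi
  have T1 : ∠ p q m + ∠ q m p + ∠ m p q = π := angle_add_angle_add_angle_eq_pi _ hqp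
  have T2 : ∠ p m r + ∠ m r p + ∠ r p m = π := angle_add_angle_add_angle_eq_pi _ hmp'
  have T3 : ∠ p q r + ∠ q r p + ∠ r p q = π := angle_add_angle_add_angle_eq_pi _ hqp
  have ray1 : ∠ p q m = ∠ p q r := by
    unfold EuclideanGeometry.angle
    simp only [vsub_eq_sub]
    have hmq' : m - q = b • (r - q) := by rw [← neg_sub q m, hqm]; module
    rw [hmq']
    exact InnerProductGeometry.angle_smul_right_of_pos _ _ hb0
  have ray2 : ∠ m r p = ∠ q r p := by
    unfold EuclideanGeometry.angle
    simp only [vsub_eq_sub]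
    have hmr' : m - r = a • (q - r) := by rw [← neg_sub r m, hrm]; module
    rw [hmr']
    exact InnerProductGeometry.angle_smul_left_of_pos _ _ ha0
  have c1 : ∠ q m p = ∠ p m q := angle_comm _ _ _
  have c2 : ∠ m p q = ∠ q p m := angle_comm _ _ _
  have c3 : ∠ r p m = ∠ m p r := angle_comm _ _ _
  have c4 : ∠ r p q = ∠ q p r := angle_comm _ _ _
  rw [h1, h2]
  linarith

lemma angle_pos_aux {p q r x : Pt}
    (hind : ∀ c d : ℝ, c • (q - p) + d • (r - p) = 0 → c = 0 ∧ d = 0)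
    {s t : ℝ} (hs : 0 < s)
    (hx : x - p = s • (q - p) + t • (r - p)) :
    0 < ∠ x p r := by
  refine lt_of_le_of_ne (angle_nonneg _ _ _) (Ne.symm ?_)
  intro h0
  unfold EuclideanGeometry.angle at h0
  simp only [vsub_eq_sub] at h0
  rw [InnerProductGeometry.angle_eq_zero_iff] at h0
  obtain ⟨hx0, κ, hκ, he⟩ := h0
  have h2 : (κ*s) • (q - p) + (κ*t - 1) • (r - p) = κ • (x - p) - (r - p) := by
    rw [hx]; module
  have h3 : κ • (x - p) - (r - p) = 0 := by rw [← he]; simp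
  have := (hind _ _ (h2.trans h3)).1
  nlinarith

end AuxBend

set_option maxHeartbeats 3200000 in
/-- For `α ∈ (0, 2π/3]`, a triangle cannot contain three pairwise noncrossing `α`-bend
edges between its three vertices. -/
theorem stmt_12 (α : ℝ) (hα : α ∈ Set.Ioc 0 (2 * π / 3))
    (p₁ p₂ p₃ : Pt) (h : AffineIndependent ℝ ![p₁, p₂, p₃]) :
    ¬ ∃ b₁ b₂ b₃ : Pt,
      b₁ ∈ interior (convexHull ℝ ({p₁, p₂, p₃} : Set Pt)) ∧
      b₂ ∈ interior (convexHull ℝ ({p₁, p₂, p₃} : Set Pt)) ∧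
      b₃ ∈ interior (convexHull ℝ ({p₁, p₂, p₃} : Set Pt)) ∧
      ∠ p₂ b₁ p₃ = α ∧ ∠ p₁ b₂ p₃ = α ∧ ∠ p₁ b₃ p₂ = α ∧
      bendImage (p₂, b₁, p₃) ∩ bendImage (p₁, b₂, p₃) ⊆ {p₃} ∧
      bendImage (p₂, b₁, p₃) ∩ bendImage (p₁, b₃, p₂) ⊆ {p₂} ∧
      bendImage (p₁, b₂, p₃) ∩ bendImage (p₁, b₃, p₂) ⊆ {p₁} := by
  rintro ⟨b1, b2, b3, hb1, hb2, hb3, ha1, ha2, ha3, h12, h13, h23⟩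
  simp only [bendImage] at h12 h13 h23
  have hrank : Module.finrank ℝ Pt = 2 := finrank_euclideanSpace_fin
  have htop : affineSpan ℝ (Set.range ![p₁, p₂, p₃]) = ⊤ :=
    h.affineSpan_eq_top_iff_card_eq_finrank_add_one.2 (by simp [hrank])
  let B : AffineBasis (Fin 3) ℝ Pt := ⟨![p₁, p₂, p₃], h, htop⟩
  have hrange : Set.range ⇑B = ({p₁, p₂, p₃} : Set Pt) := by
    show Set.range ![p₁, p₂, p₃] = _
    ext x
    constructor
    · rintro ⟨i, rfl⟩
      fin_cases i <;> simp
    · rintro (rfl | rfl | rfl)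
      exacts [⟨0, rfl⟩, ⟨1, rfl⟩, ⟨2, rfl⟩]
  have hIC := B.interior_convexHull
  rw [hrange] at hIC
  rw [hIC] at hb1 hb2 hb3
  -- coordinates
  have rep : ∀ x : Pt, x = B.coord 0 x • p₁ + B.coord 1 x • p₂ + B.coord 2 x • p₃ := by
    intro x
    have hx := B.linear_combination_coord_eq_self x
    rw [Fin.sum_univ_three] at hx
    exact hx.symm
  have hsum : ∀ x : Pt, B.coord 0 x + B.coord 1 x + B.coord 2 x = 1 := by
    intro x
    have hx := B.sum_coord_apply_eq_one x
    rwa [Fin.sum_univ_three] at hx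
  have wcoord : ∀ (z₁ z₂ z₃ : ℝ) (x : Pt), z₁ + z₂ + z₃ = 1 →
      z₁ • p₁ + z₂ • p₂ + z₃ • p₃ = x →
      B.coord 0 x = z₁ ∧ B.coord 1 x = z₂ ∧ B.coord 2 x = z₃ := by
    intro z₁ z₂ z₃ x hs he
    have h0 := weights_eq B ![z₁, z₂, z₃] (by simp [hs]) x he.symm
    exact ⟨h0 0, h0 1, h0 2⟩
  have a0p : 0 < B.coord 0 b1 := hb1 0
  have a1p : 0 < B.coord 1 b1 := hb1 1
  have a2p : 0 < B.coord 2 b1 := hb1 2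
  have bb0p : 0 < B.coord 0 b2 := hb2 0
  have bb1p : 0 < B.coord 1 b2 := hb2 1
  have bb2p : 0 < B.coord 2 b2 := hb2 2
  have c0p : 0 < B.coord 0 b3 := hb3 0
  have c1p : 0 < B.coord 1 b3 := hb3 1
  have c2p : 0 < B.coord 2 b3 := hb3 2
  have rep1 := rep b1
  have rep2 := rep b2
  have rep3 := rep b3
  have sum1 := hsum b1
  have sum2 := hsum b2
  have sum3 := hsum b3
  set a0 := B.coord 0 b1
  set a1 := B.coord 1 b1
  set a2 := B.coord 2 b1
  set bb0 := B.coord 0 b2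
  set bb1 := B.coord 1 b2
  set bb2 := B.coord 2 b2
  set c0 := B.coord 0 b3
  set c1 := B.coord 1 b3
  set c2 := B.coord 2 b3
  -- degenerate-combination lemmas
  have hnq1 : ∀ z₁ z₂ z₃ : ℝ, z₁ + z₂ + z₃ = 1 → z₁ • p₁ + z₂ • p₂ + z₃ • p₃ = p₂ → z₁ = 0 := by
    intro z₁ z₂ z₃ hs he
    have h0 := (wcoord z₁ z₂ z₃ p₂ hs he).1
    rw [show p₂ = B 1 from rfl, B.coord_apply_ne (by decide)] at h0
    exact h0.symm
  have hnq2 : ∀ z₁ z₂ z₃ : ℝ, z₁ + z₂ + z₃ = 1 → z₁ • p₂ + z₂ • p₁ + z₃ • p₃ = p₁ → z₁ = 0 := by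
    intro z₁ z₂ z₃ hs he
    have h0 := (wcoord z₂ z₁ z₃ p₁ (by linarith) (by linear_combination (norm := module) he)).2.1
    rw [show p₁ = B 0 from rfl, B.coord_apply_ne (by decide)] at h0
    exact h0.symm
  have hnq3 : ∀ z₁ z₂ z₃ : ℝ, z₁ + z₂ + z₃ = 1 → z₁ • p₁ + z₂ • p₃ + z₃ • p₂ = p₃ → z₁ = 0 := by
    intro z₁ z₂ z₃ hs he
    have h0 := (wcoord z₁ z₃ z₂ p₃ (by linarith) (by linear_combination (norm := module) he)).1
    rw [show p₃ = B 2 from rfl, B.coord_apply_ne (by decide)] at h0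
    exact h0.symm
  -- the three noncrossing inequalities
  have hX3 : segment ℝ p₃ b1 ∪ segment ℝ b1 p₂ = segment ℝ p₂ b1 ∪ segment ℝ b1 p₃ := by
    rw [segment_symm ℝ p₃ b1, segment_symm ℝ b1 p₂, Set.union_comm]
  have hY2 : segment ℝ p₂ b3 ∪ segment ℝ b3 p₁ = segment ℝ p₁ b3 ∪ segment ℝ b3 p₂ := by
    rw [segment_symm ℝ p₂ b3, segment_symm ℝ b3 p₁, Set.union_comm]
  have K1 : a0 * c2 < a2 * c0 :=
    core hnq1 rep1 sum1 a0p a1p a2p rep3 sum3 c0p c1p c2p h13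
  have rep2' : b2 = bb1 • p₂ + bb0 • p₁ + bb2 • p₃ := by rw [rep2]; module
  have rep3' : b3 = c1 • p₂ + c0 • p₁ + c2 • p₃ := by rw [rep3]; module
  have rep1'' : b1 = a0 • p₁ + a2 • p₃ + a1 • p₂ := by rw [rep1]; module
  have rep2'' : b2 = bb0 • p₁ + bb2 • p₃ + bb1 • p₂ := by rw [rep2]; module
  have hint2 : (segment ℝ p₁ b2 ∪ segment ℝ b2 p₃) ∩ (segment ℝ p₂ b3 ∪ segment ℝ b3 p₁)
      ⊆ {p₁} := by rw [hY2]; exact h23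
  have hint3 : (segment ℝ p₃ b1 ∪ segment ℝ b1 p₂) ∩ (segment ℝ p₁ b2 ∪ segment ℝ b2 p₃)
      ⊆ {p₃} := by rw [hX3]; exact h12
  have K2 : bb1 * c2 < bb2 * c1 :=
    core hnq2 rep2' (by linarith) bb1p bb0p bb2p rep3' (by linarith) c1p c0p c2p hint2
  have K3 : a0 * bb1 < a1 * bb0 :=
    core hnq3 rep1'' (by linarith) a0p a2p a1p rep2'' (by linarith) bb0p bb2p bb1p hint3
  -- decompositions of the bend points over pairs of vertices
  have d1 : b1 - p₂ = a0 • (p₁ - p₂) + a2 • (p₃ - p₂) := by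
    rw [rep1, show a1 = 1 - a0 - a2 from by linarith]; module
  have d2 : b1 - p₃ = a0 • (p₁ - p₃) + a1 • (p₂ - p₃) := by
    rw [rep1, show a2 = 1 - a0 - a1 from by linarith]; module
  have d3 : b2 - p₁ = bb1 • (p₂ - p₁) + bb2 • (p₃ - p₁) := by
    rw [rep2, show bb0 = 1 - bb1 - bb2 from by linarith]; module
  have d4 : b2 - p₃ = bb0 • (p₁ - p₃) + bb1 • (p₂ - p₃) := by
    rw [rep2, show bb2 = 1 - bb0 - bb1 from by linarith]; module
  have d5 : b3 - p₁ = c1 • (p₂ - p₁) + c2 • (p₃ - p₁) := by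
    rw [rep3, show c0 = 1 - c1 - c2 from by linarith]; module
  have d6 : b3 - p₂ = c0 • (p₁ - p₂) + c2 • (p₃ - p₂) := by
    rw [rep3, show c1 = 1 - c0 - c2 from by linarith]; module
  -- independence of direction pairs at the vertices
  have hind1 : ∀ c d : ℝ, c • (p₂ - p₁) + d • (p₃ - p₁) = 0 → c = 0 ∧ d = 0 := by
    intro c d hcd
    have he : (1 - c - d) • p₁ + c • p₂ + d • p₃ = p₁ := by
      have h' : (1 - c - d) • p₁ + c • p₂ + d • p₃ = p₁ + (c • (p₂ - p₁) + d • (p₃ - p₁)) := by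
        module
      rw [hcd, add_zero] at h'
      exact h'
    obtain ⟨-, hc, hd⟩ := wcoord _ _ _ _ (by ring) he
    rw [show p₁ = B 0 from rfl, B.coord_apply_ne (by decide)] at hc
    rw [show p₁ = B 0 from rfl, B.coord_apply_ne (by decide)] at hd
    exact ⟨hc.symm, hd.symm⟩
  have hind2 : ∀ c d : ℝ, c • (p₁ - p₂) + d • (p₃ - p₂) = 0 → c = 0 ∧ d = 0 := by
    intro c d hcd
    have he : c • p₁ + (1 - c - d) • p₂ + d • p₃ = p₂ := by
      have h' : c • p₁ + (1 - c - d) • p₂ + d • p₃ = p₂ + (c • (p₁ - p₂) + d • (p₃ - p₂)) := by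
        module
      rw [hcd, add_zero] at h'
      exact h'
    obtain ⟨hc, -, hd⟩ := wcoord _ _ _ _ (by ring) he
    rw [show p₂ = B 1 from rfl, B.coord_apply_ne (by decide)] at hc
    rw [show p₂ = B 1 from rfl, B.coord_apply_ne (by decide)] at hd
    exact ⟨hc.symm, hd.symm⟩
  have hind3 : ∀ c d : ℝ, c • (p₁ - p₃) + d • (p₂ - p₃) = 0 → c = 0 ∧ d = 0 := by
    intro c d hcd
    have he : c • p₁ + d • p₂ + (1 - c - d) • p₃ = p₃ := by
      have h' : c • p₁ + d • p₂ + (1 - c - d) • p₃ = p₃ + (c • (p₁ - p₃) + d • (p₂ - p₃)) := by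
        module
      rw [hcd, add_zero] at h'
      exact h'
    obtain ⟨hc, hd, -⟩ := wcoord _ _ _ _ (by ring) he
    rw [show p₃ = B 2 from rfl, B.coord_apply_ne (by decide)] at hc
    rw [show p₃ = B 2 from rfl, B.coord_apply_ne (by decide)] at hd
    exact ⟨hc.symm, hd.symm⟩
  have hindb2 : ∀ c d : ℝ, c • (p₁ - p₂) + d • (b1 - p₂) = 0 → c = 0 ∧ d = 0 := by
    intro c d hcd
    have h' : (c + d*a0) • (p₁ - p₂) + (d*a2) • (p₃ - p₂) = 0 := by
      have hexp : (c + d*a0) • (p₁ - p₂) + (d*a2) • (p₃ - p₂)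
          = c • (p₁ - p₂) + d • (b1 - p₂) := by rw [d1]; module
      rw [hexp, hcd]
    obtain ⟨h₁, h₂⟩ := hind2 _ _ h'
    have hd : d = 0 := by
      rcases mul_eq_zero.1 h₂ with h0 | h0
      · exact h0
      · exact absurd h0 a2p.ne'
    have h00 : d * a0 = 0 := by rw [hd]; ring
    exact ⟨by linarith [h₁, h00], hd⟩
  have hindb1 : ∀ c d : ℝ, c • (p₂ - p₁) + d • (b2 - p₁) = 0 → c = 0 ∧ d = 0 := by
    intro c d hcd
    have h' : (c + d*bb1) • (p₂ - p₁) + (d*bb2) • (p₃ - p₁) = 0 := by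
      have hexp : (c + d*bb1) • (p₂ - p₁) + (d*bb2) • (p₃ - p₁)
          = c • (p₂ - p₁) + d • (b2 - p₁) := by rw [d3]; module
      rw [hexp, hcd]
    obtain ⟨h₁, h₂⟩ := hind1 _ _ h'
    have hd : d = 0 := by
      rcases mul_eq_zero.1 h₂ with h0 | h0
      · exact h0
      · exact absurd h0 bb2p.ne'
    have h00 : d * bb1 = 0 := by rw [hd]; ring
    exact ⟨by linarith [h₁, h00], hd⟩
  have hindb3 : ∀ c d : ℝ, c • (p₁ - p₃) + d • (b1 - p₃) = 0 → c = 0 ∧ d = 0 := by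
    intro c d hcd
    have h' : (c + d*a0) • (p₁ - p₃) + (d*a1) • (p₂ - p₃) = 0 := by
      have hexp : (c + d*a0) • (p₁ - p₃) + (d*a1) • (p₂ - p₃)
          = c • (p₁ - p₃) + d • (b1 - p₃) := by rw [d2]; module
      rw [hexp, hcd]
    obtain ⟨h₁, h₂⟩ := hind3 _ _ h'
    have hd : d = 0 := by
      rcases mul_eq_zero.1 h₂ with h0 | h0
      · exact h0
      · exact absurd h0 a1p.ne'
    have h00 : d * a0 = 0 := by rw [hd]; ring
    exact ⟨by linarith [h₁, h00], hd⟩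
  -- decompositions across the bend rays
  have e1 : b3 - p₂ = ((c0*a2 - c2*a0)/a2) • (p₁ - p₂) + (c2/a2) • (b1 - p₂) := by
    rw [d6, d1]; match_scalars <;> field_simp <;> ring
  have e2 : b3 - p₁ = ((c1*bb2 - c2*bb1)/bb2) • (p₂ - p₁) + (c2/bb2) • (b2 - p₁) := by
    rw [d5, d3]; match_scalars <;> field_simp <;> ring
  have e3 : b2 - p₃ = ((bb0*a1 - bb1*a0)/a1) • (p₁ - p₃) + (bb1/a1) • (b1 - p₃) := by
    rw [d4, d2]; match_scalars <;> field_simp <;> ring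
  have spos1 : 0 < (c0*a2 - c2*a0)/a2 := div_pos (by nlinarith [K1]) a2p
  have spos2 : 0 < (c1*bb2 - c2*bb1)/bb2 := div_pos (by nlinarith [K2]) bb2p
  have spos3 : 0 < (bb0*a1 - bb1*a0)/a1 := div_pos (by nlinarith [K3]) a1p
  -- angle splittings
  have S1 : ∠ p₁ p₂ b1 + ∠ b1 p₂ p₃ = ∠ p₁ p₂ p₃ := angle_split hind2 a0p a2p d1
  have S2 : ∠ p₁ p₃ b1 + ∠ b1 p₃ p₂ = ∠ p₁ p₃ p₂ := angle_split hind3 a0p a1p d2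
  have S3 : ∠ p₂ p₁ b2 + ∠ b2 p₁ p₃ = ∠ p₂ p₁ p₃ := angle_split hind1 bb1p bb2p d3
  have S4 : ∠ p₁ p₃ b2 + ∠ b2 p₃ p₂ = ∠ p₁ p₃ p₂ := angle_split hind3 bb0p bb1p d4
  have S5 : ∠ p₂ p₁ b3 + ∠ b3 p₁ p₃ = ∠ p₂ p₁ p₃ := angle_split hind1 c1p c2p d5
  have S6 : ∠ p₁ p₂ b3 + ∠ b3 p₂ p₃ = ∠ p₁ p₂ p₃ := angle_split hind2 c0p c2p d6
  have T1 : ∠ p₁ p₂ b3 + ∠ b3 p₂ b1 = ∠ p₁ p₂ b1 :=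
    angle_split hindb2 spos1 (div_pos c2p a2p) e1
  have T2 : ∠ p₂ p₁ b3 + ∠ b3 p₁ b2 = ∠ p₂ p₁ b2 :=
    angle_split hindb1 spos2 (div_pos c2p bb2p) e2
  have T3 : ∠ p₁ p₃ b2 + ∠ b2 p₃ b1 = ∠ p₁ p₃ b1 :=
    angle_split hindb3 spos3 (div_pos bb1p a1p) e3
  have P1 : 0 < ∠ b3 p₂ b1 := angle_pos_aux hindb2 spos1 e1
  have P2 : 0 < ∠ b3 p₁ b2 := angle_pos_aux hindb1 spos2 e2
  have P3 : 0 < ∠ b2 p₃ b1 := angle_pos_aux hindb3 spos3 e3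
  -- distinctness for triangle sums
  have hp21 : p₂ ≠ p₁ := by
    intro hq
    have := (hind1 1 0 (by rw [hq]; module)).1
    norm_num at this
  have hp31 : p₃ ≠ p₁ := by
    intro hq
    have := (hind1 0 1 (by rw [hq]; module)).2
    norm_num at this
  have hp32 : p₃ ≠ p₂ := by
    intro hq
    have := (hind2 0 1 (by rw [hq]; module)).2
    norm_num at this
  have hcoord02 : B.coord 0 p₂ = 0 := by
    rw [show p₂ = B 1 from rfl]; exact B.coord_apply_ne (by decide)
  have hcoord11 : B.coord 1 p₁ = 0 := by
    rw [show p₁ = B 0 from rfl]; exact B.coord_apply_ne (by decide)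
  have hb1p2 : b1 ≠ p₂ := by
    intro hq
    have h0 : a0 = 0 := by
      have hh : a0 = B.coord 0 b1 := rfl
      rw [hh, hq, hcoord02]
    linarith
  have hb2p1 : b2 ≠ p₁ := by
    intro hq
    have h0 : bb1 = 0 := by
      have hh : bb1 = B.coord 1 b2 := rfl
      rw [hh, hq, hcoord11]
    linarith
  have hb3p1 : b3 ≠ p₁ := by
    intro hq
    have h0 : c1 = 0 := by
      have hh : c1 = B.coord 1 b3 := rfl
      rw [hh, hq, hcoord11]
    linarith
  -- triangle angle sums
  have TS0 : ∠ p₁ p₂ p₃ + ∠ p₂ p₃ p₁ + ∠ p₃ p₁ p₂ = π :=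
    EuclideanGeometry.angle_add_angle_add_angle_eq_pi _ hp21
  have TS1 : ∠ p₂ b1 p₃ + ∠ b1 p₃ p₂ + ∠ p₃ p₂ b1 = π :=
    EuclideanGeometry.angle_add_angle_add_angle_eq_pi _ hb1p2
  have TS2 : ∠ p₁ b2 p₃ + ∠ b2 p₃ p₁ + ∠ p₃ p₁ b2 = π :=
    EuclideanGeometry.angle_add_angle_add_angle_eq_pi _ hb2p1
  have TS3 : ∠ p₁ b3 p₂ + ∠ b3 p₂ p₁ + ∠ p₂ p₁ b3 = π :=
    EuclideanGeometry.angle_add_angle_add_angle_eq_pi _ hb3p1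
  have cc1 : ∠ p₃ p₂ b1 = ∠ b1 p₂ p₃ := angle_comm _ _ _
  have cc2 : ∠ b2 p₃ p₁ = ∠ p₁ p₃ b2 := angle_comm _ _ _
  have cc3 : ∠ p₃ p₁ b2 = ∠ b2 p₁ p₃ := angle_comm _ _ _
  have cc4 : ∠ b3 p₂ p₁ = ∠ p₁ p₂ b3 := angle_comm _ _ _
  have cc5 : ∠ p₂ p₃ p₁ = ∠ p₁ p₃ p₂ := angle_comm _ _ _
  have cc6 : ∠ p₃ p₁ p₂ = ∠ p₂ p₁ p₃ := angle_comm _ _ _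
  have hα2 : α ≤ 2 * π / 3 := hα.2
  linarith [S1, S2, S3, S4, S5, S6, T1, T2, T3, P1, P2, P3, TS0, TS1, TS2, TS3]
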